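/- Let A be a subset of a real Hilbert space H with d(A) = √2 such that for every ε ∈ (0, √2) and every positive integer p there exist p + 1 points of A at pairwise distances at least √2 − ε. Then r_H(A) = 1, i.e., A is an extremal set. -/

import Mathlib

noncomputable def chebRadius {H : Type*} [NormedAddCommGroup H] (A : Set H) : ℝ :=
  ⨅ y : H, ⨆ x : A, ‖(x : H) - y‖

lemma key_identity {H : Type*} [NormedAddCommGroup H] [InnerProductSpace ℝ H]
    (n : ℕ) (z : Fin n → H) (y : H) :
    (∑ i, ∑ j, ‖z i - z j‖^2) + 2*‖∑ i, (z i - y)‖^2 = 2*n*∑ i, ‖z i - y‖^2 := by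
  have h1 : ∀ i j : Fin n, ‖z i - z j‖^2
      = ‖z i - y‖^2 + ‖z j - y‖^2 - 2 * (inner ℝ (z i - y) (z j - y) : ℝ) := by
    intro i j
    have h : z i - z j = (z i - y) - (z j - y) := by abel
    rw [h, @norm_sub_sq_real]
    ring
  have h2 : (∑ i, ∑ j, (2:ℝ) * inner ℝ (z i - y) (z j - y)) = 2 * ‖∑ i, (z i - y)‖^2 := by
    simp_rw [← Finset.mul_sum, ← inner_sum, ← sum_inner, real_inner_self_eq_norm_sq]
  have h3 : (∑ i : Fin n, (z i - y)) = (∑ i, z i) - n • y := by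
    rw [Finset.sum_sub_distrib, Finset.sum_const, Finset.card_univ, Fintype.card_fin]
  rw [h3] at h2
  simp_rw [h1, Finset.sum_sub_distrib, Finset.sum_add_distrib, Finset.sum_const,
    Finset.card_univ, Fintype.card_fin, nsmul_eq_mul, h2, ← Finset.mul_sum]
  ring

set_option maxHeartbeats 2000000 in
theorem stmt9 {H : Type*} [NormedAddCommGroup H] [InnerProductSpace ℝ H] [CompleteSpace H] (A : Set H)
    (hd : Metric.diam A = Real.sqrt 2)
    (hsimp : ∀ ε ∈ Set.Ioo (0 : ℝ) (Real.sqrt 2), ∀ p : ℕ, 0 < p →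
      ∃ z : Fin (p + 1) → H, (∀ i, z i ∈ A) ∧
        ∀ i j, i ≠ j → Real.sqrt 2 - ε ≤ ‖z i - z j‖) :
    chebRadius A = 1 := by
  have hs2 : (1:ℝ) < Real.sqrt 2 := by
    rw [show (1:ℝ) = Real.sqrt 1 by simp]
    exact Real.sqrt_lt_sqrt (by norm_num) (by norm_num)
  have hs2sq : Real.sqrt 2 ^ 2 = 2 := Real.sq_sqrt (by norm_num)
  -- A is bounded
  have hbA : Bornology.IsBounded A := by
    by_contra h
    rw [Metric.diam, Metric.ediam_eq_top_iff_unbounded.2 h] at hd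
    simp at hd
    nlinarith
  -- A is nonempty
  have hAne : A.Nonempty := by
    obtain ⟨z, hz, -⟩ := hsimp 1 ⟨one_pos, hs2⟩ 1 one_pos
    exact ⟨z 0, hz 0⟩
  haveI : Nonempty A := hAne.to_subtype
  -- sups are bounded above
  obtain ⟨C, hC⟩ := hbA.exists_norm_le
  have hbdd : ∀ y : H, BddAbove (Set.range fun x : A => ‖(x : H) - y‖) := by
    intro y
    refine ⟨C + ‖y‖, ?_⟩
    rintro r ⟨x, rfl⟩
    exact (norm_sub_le _ _).trans (by linarith [hC x x.2])
  set S : H → ℝ := fun y => ⨆ x : A, ‖(x : H) - y‖ with hS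
  have hS0 : ∀ y, 0 ≤ S y := fun y => Real.iSup_nonneg fun x => norm_nonneg _
  have hSbb : BddBelow (Set.range S) := ⟨0, by rintro r ⟨y, rfl⟩; exact hS0 y⟩
  -- the sequence q
  set q : ℕ → ℝ := fun k => ((k:ℝ)+1)/((k:ℝ)+2) * (Real.sqrt 2 - ((k:ℝ)+2)⁻¹)^2 / 2 with hq
  -- q tends to 1
  have he : Filter.Tendsto (fun k : ℕ => ((k:ℝ)+2)⁻¹) Filter.atTop (nhds 0) :=
    (Filter.tendsto_atTop_add_const_right _ 2 tendsto_natCast_atTop_atTop).inv_tendsto_atTop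
  have hqt : Filter.Tendsto q Filter.atTop (nhds 1) := by
    have h1 : Filter.Tendsto (fun k : ℕ => ((k:ℝ)+1)/((k:ℝ)+2)) Filter.atTop (nhds 1) := by
      have heq : (fun k : ℕ => ((k:ℝ)+1)/((k:ℝ)+2)) = fun k : ℕ => 1 - ((k:ℝ)+2)⁻¹ := by
        funext k
        have : ((k:ℝ)+2) ≠ 0 := by positivity
        field_simp
        ring
      rw [heq]
      simpa using (tendsto_const_nhds.sub he)
    have h2 : Filter.Tendsto (fun k : ℕ => (Real.sqrt 2 - ((k:ℝ)+2)⁻¹)^2) Filter.atTop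
        (nhds ((Real.sqrt 2)^2)) := by
      simpa [hs2sq] using ((he.const_sub (Real.sqrt 2)).pow 2)
    have h3 := (h1.mul h2).div_const 2
    rw [hs2sq] at h3
    simpa using h3
  -- core per-k facts
  have hcore : ∀ k : ℕ, (∀ y : H, Real.sqrt (q k) ≤ S y) ∧ chebRadius A ≤ Real.sqrt (2 - q k) := by
    intro k
    set ε : ℝ := ((k:ℝ)+2)⁻¹ with hε
    have hε0 : 0 < ε := by positivity
    have hε1 : ε ≤ 1 := by
      rw [hε, inv_le_one_iff₀]; right; linarith [Nat.cast_nonneg (α := ℝ) k]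
    obtain ⟨z, hzA, hzd⟩ := hsimp ε ⟨hε0, by linarith⟩ (k+1) k.succ_pos
    set β : ℝ := Real.sqrt 2 - ε with hβ
    have hβ0 : 0 ≤ β := by rw [hβ]; linarith
    have hnR : ((k:ℝ)+2) ≠ 0 := by positivity
    -- cast of the number of points
    have hcast : ((k+1+1 : ℕ) : ℝ) = (k:ℝ)+2 := by push_cast; ring
    -- lower bound for the double sum
    have hdsum : ((k:ℝ)+2) * ((k:ℝ)+1) * β^2 ≤ ∑ i, ∑ j, ‖z i - z j‖^2 := by
      have hrow : ∀ i : Fin (k+1+1), ((k:ℝ)+1) * β^2 ≤ ∑ j, ‖z i - z j‖^2 := by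
        intro i
        calc ((k:ℝ)+1) * β^2 = ∑ _j ∈ Finset.univ.erase i, β^2 := by
              rw [Finset.sum_const, Finset.card_erase_of_mem (Finset.mem_univ i),
                Finset.card_univ, Fintype.card_fin, nsmul_eq_mul]
              push_cast
              ring
          _ ≤ ∑ j ∈ Finset.univ.erase i, ‖z i - z j‖^2 := by
              refine Finset.sum_le_sum fun j hj => ?_
              exact pow_le_pow_left₀ hβ0 (hzd i j (Finset.ne_of_mem_erase hj).symm) 2
          _ ≤ ∑ j, ‖z i - z j‖^2 :=
              Finset.sum_le_sum_of_subset_of_nonneg (Finset.erase_subset _ _)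
                (fun j _ _ => by positivity)
      calc ((k:ℝ)+2) * ((k:ℝ)+1) * β^2 = ∑ _i : Fin (k+1+1), ((k:ℝ)+1) * β^2 := by
            rw [Finset.sum_const, Finset.card_univ, Fintype.card_fin, nsmul_eq_mul]
            push_cast
            ring
        _ ≤ _ := Finset.sum_le_sum fun i _ => hrow i
    have hqval : q k = ((k:ℝ)+1) * β^2 / (2 * ((k:ℝ)+2)) := by
      rw [hq, hβ, hε, eq_div_iff (by positivity : (2*((k:ℝ)+2)) ≠ 0)]
      field_simp
    constructor
    · -- lower bound on every S y
      intro y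
      have hkey := key_identity (k+1+1) z y
      rw [hcast] at hkey
      have hsum : ((k:ℝ)+2) * q k ≤ ∑ i, ‖z i - y‖^2 := by
        have hnn : (0:ℝ) ≤ 2*‖∑ i, (z i - y)‖^2 := by positivity
        have hk2 : (0:ℝ) < (k:ℝ)+2 := by positivity
        have h6 : ((k:ℝ)+1)*β^2 ≤ 2*∑ i, ‖z i - y‖^2 := by
          refine le_of_mul_le_mul_left ?_ hk2
          calc ((k:ℝ)+2) * (((k:ℝ)+1)*β^2) ≤ ((k:ℝ)+2) * (2*∑ i, ‖z i - y‖^2) := by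
                nlinarith [hdsum]
            _ = _ := rfl
        have h7 : ((k:ℝ)+2) * q k = ((k:ℝ)+1)*β^2/2 := by
          rw [hqval]; field_simp
        rw [h7, div_le_iff₀ (by norm_num : (0:ℝ) < 2)]
        linarith
      obtain ⟨i, -, hi⟩ := Finset.exists_le_of_sum_le (Finset.univ_nonempty)
        (le_of_eq_of_le (by rw [Finset.sum_const, Finset.card_univ, Fintype.card_fin,
          nsmul_eq_mul, hcast]) hsum : ∑ _i : Fin (k+1+1), q k ≤ ∑ i, ‖z i - y‖^2)
      have h1 : Real.sqrt (q k) ≤ ‖z i - y‖ := by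
        calc Real.sqrt (q k) ≤ Real.sqrt (‖z i - y‖^2) := Real.sqrt_le_sqrt hi
          _ = ‖z i - y‖ := Real.sqrt_sq (norm_nonneg _)
      exact h1.trans (le_ciSup (hbdd y) (⟨z i, hzA i⟩ : A))
    · -- upper bound via the centroid
      set c : H := (((k:ℝ)+2))⁻¹ • ∑ i, z i with hc
      have hSc : S c ≤ Real.sqrt (2 - q k) := by
        refine ciSup_le fun x => ?_
        have hxA := x.2
        have hkey := key_identity (k+1+1) z (x : H)
        rw [hcast] at hkey
        have hsumc : (∑ i, (z i - (x:H))) = ((k:ℝ)+2) • (c - (x:H)) := by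
          rw [Finset.sum_sub_distrib, Finset.sum_const, Finset.card_univ, Fintype.card_fin,
            smul_sub, hc, smul_inv_smul₀ hnR, ← hcast, Nat.cast_smul_eq_nsmul]
        have hnormc : ‖∑ i, (z i - (x:H))‖^2 = ((k:ℝ)+2)^2 * ‖c - (x:H)‖^2 := by
          rw [hsumc, norm_smul, mul_pow, Real.norm_eq_abs, abs_of_nonneg (by positivity)]
        have heach : ∀ i, ‖z i - (x:H)‖^2 ≤ 2 := by
          intro i
          have hdist : ‖z i - (x:H)‖ ≤ Real.sqrt 2 := by
            rw [← hd, ← dist_eq_norm]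
            exact Metric.dist_le_diam_of_mem hbA (hzA i) hxA
          calc ‖z i - (x:H)‖^2 ≤ Real.sqrt 2 ^ 2 := pow_le_pow_left₀ (norm_nonneg _) hdist 2
            _ = 2 := hs2sq
        have hsumle : (∑ i, ‖z i - (x:H)‖^2) ≤ ((k:ℝ)+2) * 2 := by
          calc (∑ i, ‖z i - (x:H)‖^2) ≤ ∑ _i : Fin (k+1+1), (2:ℝ) :=
                Finset.sum_le_sum fun i _ => heach i
            _ = ((k:ℝ)+2) * 2 := by
                rw [Finset.sum_const, Finset.card_univ, Fintype.card_fin, nsmul_eq_mul, hcast]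
        have hcx : ‖c - (x:H)‖^2 ≤ 2 - q k := by
          have hk2 : (0:ℝ) < (k:ℝ)+2 := by positivity
          have hk2sq : (0:ℝ) < 2*((k:ℝ)+2)^2 := by positivity
          have h5 : 2*((k:ℝ)+2) * (∑ i, ‖z i - (x:H)‖^2) ≤ 2*((k:ℝ)+2) * (((k:ℝ)+2)*2) :=
            mul_le_mul_of_nonneg_left hsumle (by positivity)
          refine le_of_mul_le_mul_left ?_ hk2sq
          have h7 : 2*((k:ℝ)+2)^2 * (2 - q k)
              = 4*((k:ℝ)+2)^2 - ((k:ℝ)+2)*(((k:ℝ)+1)*β^2) := by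
            rw [hqval]; field_simp; ring
          rw [h7]
          nlinarith [hdsum, hkey, h5]
        have : ‖(x:H) - c‖ ≤ Real.sqrt (2 - q k) := by
          rw [norm_sub_rev]
          calc ‖c - (x:H)‖ = Real.sqrt (‖c - (x:H)‖^2) := (Real.sqrt_sq (norm_nonneg _)).symm
            _ ≤ Real.sqrt (2 - q k) := Real.sqrt_le_sqrt hcx
        exact this
      exact (ciInf_le hSbb c).trans hSc
  -- conclude by limits
  have hup : chebRadius A ≤ 1 := by
    have ht : Filter.Tendsto (fun k => Real.sqrt (2 - q k)) Filter.atTop (nhds 1) := by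
      have h0 : Filter.Tendsto (fun k => 2 - q k) Filter.atTop (nhds 1) := by
        have h1 := (tendsto_const_nhds (x := (2:ℝ))).sub hqt
        norm_num at h1
        exact h1
      have := (Real.continuous_sqrt.tendsto 1).comp h0
      simpa [Function.comp_def] using this
    exact ge_of_tendsto ht (Filter.Eventually.of_forall fun k => (hcore k).2)
  have hlo : 1 ≤ chebRadius A := by
    refine le_ciInf fun y => ?_
    have ht : Filter.Tendsto (fun k => Real.sqrt (q k)) Filter.atTop (nhds 1) := by
      have := (Real.continuous_sqrt.tendsto 1).comp hqt
      simpa [Function.comp_def] using this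
    exact le_of_tendsto ht (Filter.Eventually.of_forall fun k => (hcore k).1 y)
  linarith
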